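/- For all m, n ≥ 3 there exist regular languages L' and L, with alphabets Σ_{L'} and Σ_L each of cardinality 3 whose intersection has cardinality 2 (so Σ_{L'} \ Σ_L and Σ_L \ Σ_{L'} are both nonempty), such that L' has quotient complexity m, L has quotient complexity n, and the product L'·L has quotient complexity exactly m·2^n + 2^(n-1). -/

import Mathlib

/-- The alphabet of a language: letters occurring in some word of `L`. -/
def alphabetOf {α : Type*} (L : Language α) : Set α :=
  {a | ∃ u v : List α, u ++ [a] ++ v ∈ L}

/-- The left quotient of `L` by a word `w`. -/
def leftQuotient {α : Type*} (L : Language α) (w : List α) : Language α :=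
  {x | w ++ x ∈ L}

/-- The set of left quotients of `L` by words over the alphabet of `L`. -/
def quotientSet {α : Type*} (L : Language α) : Set (Language α) :=
  {K | ∃ w : List α, (∀ a ∈ w, a ∈ alphabetOf L) ∧ K = leftQuotient L w}

/-- `L` is regular with quotient complexity `m`: the set of its left quotients
(by words over its own alphabet) is finite of cardinality exactly `m`. -/
def HasComplexity {α : Type*} (L : Language α) (m : ℕ) : Prop :=
  (quotientSet L).Finite ∧ (quotientSet L).ncard = m

/-- All words whose letters lie in `S`. -/
def starOf {α : Type*} (S : Set α) : Language α :=
  {w | ∀ a ∈ w, a ∈ S}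

/-- A nonempty language `L` is a right ideal if `L · Σ_L^* = L`. -/
def IsRightIdeal {α : Type*} (L : Language α) : Prop :=
  (∃ w, w ∈ L) ∧ L * starOf (alphabetOf L) = L

/-- A nonempty language `L` is a left ideal if `Σ_L^* · L = L`. -/
def IsLeftIdeal {α : Type*} (L : Language α) : Prop :=
  (∃ w, w ∈ L) ∧ starOf (alphabetOf L) * L = L

/-- A nonempty language `L` is a two-sided ideal if `Σ_L^* · L · Σ_L^* = L`. -/
def IsTwoSidedIdeal {α : Type*} (L : Language α) : Prop :=
  (∃ w, w ∈ L) ∧ starOf (alphabetOf L) * L * starOf (alphabetOf L) = L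

namespace PT
open List

variable (m n : ℕ)

def LA : Language (Fin 4) := {w | (3:Fin 4) ∉ w ∧ ((w.count 0 : ℕ) : ZMod m) = -1}
def LB : Language (Fin 4) := {w | (2:Fin 4) ∉ w ∧ ((w.count 1 : ℕ) : ZMod n) = -1}

def NQ (p : ZMod m) : Language (Fin 4) := {x | (3:Fin 4) ∉ x ∧ p + ((x.count 0 : ℕ) : ZMod m) = -1}
def MQ (q : ZMod n) : Language (Fin 4) := {x | (2:Fin 4) ∉ x ∧ q + ((x.count 1 : ℕ) : ZMod n) = -1}

variable {m n}

lemma mem_LA {w : List (Fin 4)} : w ∈ LA m ↔ (3:Fin 4) ∉ w ∧ ((w.count 0 : ℕ) : ZMod m) = -1 := Iff.rfl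
lemma mem_LB {w : List (Fin 4)} : w ∈ LB n ↔ (2:Fin 4) ∉ w ∧ ((w.count 1 : ℕ) : ZMod n) = -1 := Iff.rfl
lemma mem_NQ {p : ZMod m} {x : List (Fin 4)} : x ∈ NQ m p ↔ (3:Fin 4) ∉ x ∧ p + ((x.count 0 : ℕ) : ZMod m) = -1 := Iff.rfl
lemma mem_MQ {q : ZMod n} {x : List (Fin 4)} : x ∈ MQ n q ↔ (2:Fin 4) ∉ x ∧ q + ((x.count 1 : ℕ) : ZMod n) = -1 := Iff.rfl

lemma cast_pred (hm : 1 ≤ m) : ((m - 1 : ℕ) : ZMod m) = -1 := by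
  have h : ((m : ℕ) : ZMod m) = 0 := ZMod.natCast_self m
  push_cast [Nat.cast_sub hm]
  rw [h]; ring

lemma not_mem_replicate {a b : Fin 4} (hab : b ≠ a) {k : ℕ} : a ∉ replicate k b := by
  intro h; exact hab (mem_replicate.1 h).2.symm

lemma repA_mem (hm : 1 ≤ m) : replicate (m-1) (0 : Fin 4) ∈ LA m := by
  refine ⟨not_mem_replicate (by decide), ?_⟩
  rw [count_replicate, if_pos (by decide)]; exact cast_pred hm

lemma repB_mem (hn : 1 ≤ n) : replicate (n-1) (1 : Fin 4) ∈ LB n := by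
  refine ⟨not_mem_replicate (by decide), ?_⟩
  rw [count_replicate, if_pos (by decide)]; exact cast_pred hn

lemma alphabet_LA (hm : 3 ≤ m) : alphabetOf (LA m) = {0, 1, 2} := by
  ext a
  simp only [Set.mem_insert_iff, Set.mem_singleton_iff]
  constructor
  · rintro ⟨u, v, h3, -⟩
    have : a ≠ 3 := fun h => h3 (by subst h; simp)
    omega
  · rintro (rfl | rfl | rfl)
    · refine ⟨[], replicate (m-2) 0, ?_, ?_⟩
      · intro h; simp [List.mem_replicate] at h
      · have hc : (([] ++ [0] ++ replicate (m-2) 0 : List (Fin 4)).count 0) = m - 1 := by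
          simp [count_replicate, count_singleton]; omega
        rw [hc]; exact cast_pred (by omega)
    · refine ⟨[], replicate (m-1) 0, ?_, ?_⟩
      · intro h; simp [List.mem_replicate] at h
      · have hc : (([] ++ [1] ++ replicate (m-1) 0 : List (Fin 4)).count 0) = m - 1 := by
          simp [count_replicate, count_singleton]
        rw [hc]; exact cast_pred (by omega)
    · refine ⟨[], replicate (m-1) 0, ?_, ?_⟩
      · intro h; simp [List.mem_replicate] at h
      · have hc : (([] ++ [2] ++ replicate (m-1) 0 : List (Fin 4)).count 0) = m - 1 := by
          simp [count_replicate, count_singleton]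
        rw [hc]; exact cast_pred (by omega)

lemma alphabet_LB (hn : 3 ≤ n) : alphabetOf (LB n) = {0, 1, 3} := by
  ext a
  simp only [Set.mem_insert_iff, Set.mem_singleton_iff]
  constructor
  · rintro ⟨u, v, h3, -⟩
    have : a ≠ 2 := fun h => h3 (by subst h; simp)
    omega
  · rintro (rfl | rfl | rfl)
    · refine ⟨[], replicate (n-1) 1, ?_, ?_⟩
      · intro h; simp [List.mem_replicate] at h
      · have hc : (([] ++ [0] ++ replicate (n-1) 1 : List (Fin 4)).count 1) = n - 1 := by
          simp [count_replicate, count_singleton]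
        rw [hc]; exact cast_pred (by omega)
    · refine ⟨[], replicate (n-2) 1, ?_, ?_⟩
      · intro h; simp [List.mem_replicate] at h
      · have hc : (([] ++ [1] ++ replicate (n-2) 1 : List (Fin 4)).count 1) = n - 1 := by
          simp [count_replicate, count_singleton]; omega
        rw [hc]; exact cast_pred (by omega)
    · refine ⟨[], replicate (n-1) 1, ?_, ?_⟩
      · intro h; simp [List.mem_replicate] at h
      · have hc : (([] ++ [3] ++ replicate (n-1) 1 : List (Fin 4)).count 1) = n - 1 := by
          simp [count_replicate, count_singleton]
        rw [hc]; exact cast_pred (by omega)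

end PT

namespace PT
variable {m n : ℕ}
open List

lemma quot_LA {w : List (Fin 4)} (h3 : (3:Fin 4) ∉ w) :
    leftQuotient (LA m) w = NQ m ((w.count 0 : ℕ) : ZMod m) := by
  ext x
  have : x ∈ leftQuotient (LA m) w ↔ (3:Fin 4) ∉ w ++ x ∧ (((w ++ x).count 0 : ℕ) : ZMod m) = -1 := Iff.rfl
  rw [this, mem_NQ]
  simp only [mem_append, count_append, Nat.cast_add]
  tauto

lemma quot_LB {w : List (Fin 4)} (h2 : (2:Fin 4) ∉ w) :
    leftQuotient (LB n) w = MQ n ((w.count 1 : ℕ) : ZMod n) := by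
  ext x
  have : x ∈ leftQuotient (LB n) w ↔ (2:Fin 4) ∉ w ++ x ∧ (((w ++ x).count 1 : ℕ) : ZMod n) = -1 := Iff.rfl
  rw [this, mem_MQ]
  simp only [mem_append, count_append, Nat.cast_add]
  tauto

lemma val_cast {k : ℕ} [NeZero k] (p : ZMod k) : ((p.val : ℕ) : ZMod k) = p := by
  rw [ZMod.natCast_val, ZMod.cast_id]

lemma NQ_inj [NeZero m] : Function.Injective (NQ m) := by
  intro p p' h
  have hx : replicate (-1 - p).val (0:Fin 4) ∈ NQ m p := by
    refine ⟨not_mem_replicate (by decide), ?_⟩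
    rw [count_replicate, if_pos (by decide), val_cast]; ring
  rw [h] at hx
  have := hx.2
  rw [count_replicate, if_pos (by decide), val_cast] at this
  linear_combination -this

lemma MQ_inj [NeZero n] : Function.Injective (MQ n) := by
  intro p p' h
  have hx : replicate (-1 - p).val (1:Fin 4) ∈ MQ n p := by
    refine ⟨not_mem_replicate (by decide), ?_⟩
    rw [count_replicate, if_pos (by decide), val_cast]; ring
  rw [h] at hx
  have := hx.2
  rw [count_replicate, if_pos (by decide), val_cast] at this
  linear_combination -this

lemma quotSet_LA (hm : 3 ≤ m) : quotientSet (LA m) = Set.range (NQ m) := by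
  haveI : NeZero m := ⟨by omega⟩
  ext K
  constructor
  · rintro ⟨w, hw, rfl⟩
    have h3 : (3:Fin 4) ∉ w := by
      intro h
      have := hw 3 h
      rw [alphabet_LA hm] at this
      simp only [Set.mem_insert_iff, Set.mem_singleton_iff] at this
      omega
    exact ⟨_, (quot_LA h3).symm⟩
  · rintro ⟨p, rfl⟩
    refine ⟨replicate p.val 0, ?_, ?_⟩
    · intro a ha
      rw [alphabet_LA hm]
      rw [mem_replicate] at ha
      simp [ha.2]
    · rw [quot_LA (not_mem_replicate (by decide))]
      rw [count_replicate, if_pos (by decide), val_cast]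

lemma quotSet_LB (hn : 3 ≤ n) : quotientSet (LB n) = Set.range (MQ n) := by
  haveI : NeZero n := ⟨by omega⟩
  ext K
  constructor
  · rintro ⟨w, hw, rfl⟩
    have h2 : (2:Fin 4) ∉ w := by
      intro h
      have := hw 2 h
      rw [alphabet_LB hn] at this
      simp only [Set.mem_insert_iff, Set.mem_singleton_iff] at this
      omega
    exact ⟨_, (quot_LB h2).symm⟩
  · rintro ⟨q, rfl⟩
    refine ⟨replicate q.val 1, ?_, ?_⟩
    · intro a ha
      rw [alphabet_LB hn]
      rw [mem_replicate] at ha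
      simp [ha.2]
    · rw [quot_LB (not_mem_replicate (by decide))]
      rw [count_replicate, if_pos (by decide), val_cast]

lemma complexity_LA (hm : 3 ≤ m) : HasComplexity (LA m) m := by
  haveI : NeZero m := ⟨by omega⟩
  rw [HasComplexity, quotSet_LA hm]
  refine ⟨Set.finite_range _, ?_⟩
  rw [← Set.image_univ, Set.ncard_image_of_injective _ NQ_inj, Set.ncard_univ]
  simp [Nat.card_eq_fintype_card, ZMod.card]

lemma complexity_LB (hn : 3 ≤ n) : HasComplexity (LB n) n := by
  haveI : NeZero n := ⟨by omega⟩
  rw [HasComplexity, quotSet_LB hn]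
  refine ⟨Set.finite_range _, ?_⟩
  rw [← Set.image_univ, Set.ncard_image_of_injective _ MQ_inj, Set.ncard_univ]
  simp [Nat.card_eq_fintype_card, ZMod.card]

end PT

namespace PT
open List
variable (m n : ℕ)

def SP (w : List (Fin 4)) : Set (ZMod n) :=
  {q | ∃ u v : List (Fin 4), w = u ++ v ∧ u ∈ LA m ∧ (2:Fin 4) ∉ v ∧ ((v.count 1 : ℕ) : ZMod n) = q}

def PO (w : List (Fin 4)) : Option (ZMod m) :=
  if (3:Fin 4) ∈ w then none else some ((w.count 0 : ℕ) : ZMod m)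

def UQ (S : Finset (ZMod n)) : Language (Fin 4) := {x | ∃ q ∈ S, x ∈ MQ n q}

def KQ (x : Option (ZMod m) × Finset (ZMod n)) : Language (Fin 4) :=
  (x.1.elim 0 (NQ m)) * LB n + UQ n x.2

def VS : Set (Option (ZMod m) × Finset (ZMod n)) := {x | x.1 = some (-1) → 0 ∈ x.2}

noncomputable def SF [NeZero n] (w : List (Fin 4)) : Finset (ZMod n) :=
  (Set.toFinite (SP m n w)).toFinset

variable {m n}

lemma mem_SF [NeZero n] {w : List (Fin 4)} {q : ZMod n} : q ∈ SF m n w ↔ q ∈ SP m n w := by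
  rw [SF, Set.Finite.mem_toFinset]

lemma quot_prod [NeZero n] (w : List (Fin 4)) :
    leftQuotient (LA m * LB n) w = KQ m n (PO m w, SF m n w) := by
  ext x
  have hx : x ∈ leftQuotient (LA m * LB n) w ↔ w ++ x ∈ LA m * LB n := Iff.rfl
  rw [hx, Language.mem_mul, KQ, Language.mem_add]
  constructor
  · rintro ⟨u, hu, v, hv, huv⟩
    rcases List.append_eq_append_iff.1 huv with ⟨a', ha1, ha2⟩ | ⟨c', hc1, hc2⟩
    · -- split inside w : union part
      right
      subst ha2
      rcases hv with ⟨hv2, hvc⟩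
      rw [mem_append] at hv2
      push_neg at hv2
      refine ⟨_, mem_SF.2 ⟨u, a', ha1, hu, hv2.1, rfl⟩, hv2.2, ?_⟩
      rw [count_append, Nat.cast_add] at hvc
      rw [← hvc]
    · -- split inside x : product part
      left
      subst hc1 hc2
      rcases hu with ⟨hu3, huc⟩
      rw [mem_append] at hu3
      push_neg at hu3
      have hPO : PO m w = some ((w.count 0 : ℕ) : ZMod m) := if_neg hu3.1
      rw [hPO]
      rw [Language.mem_mul]
      refine ⟨c', ⟨hu3.2, ?_⟩, v, hv, rfl⟩
      rw [count_append, Nat.cast_add] at huc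
      rw [← huc]
  · intro h
    rcases h with h | h
    · by_cases h3 : (3:Fin 4) ∈ w
      · rw [PO, if_pos h3] at h
        simp only [Option.elim] at h
        rw [zero_mul] at h
        exact absurd h (by simp [Language.notMem_zero])
      · rw [PO, if_neg h3] at h
        simp only [Option.elim] at h
        rw [Language.mem_mul] at h
        rcases h with ⟨c', hc', v, hv, rfl⟩
        refine ⟨w ++ c', ⟨?_, ?_⟩, v, hv, by rw [append_assoc]⟩
        · rw [mem_append]; push_neg; exact ⟨h3, hc'.1⟩
        · rw [count_append, Nat.cast_add]
          have := hc'.2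
          rw [← this]
    · rcases h with ⟨q, hq, hxq⟩
      rcases mem_SF.1 hq with ⟨u, v', hw, hu, h2v, hq'⟩
      refine ⟨u, hu, v' ++ x, ⟨?_, ?_⟩, by rw [hw, append_assoc]⟩
      · rw [mem_append]; push_neg; exact ⟨h2v, hxq.1⟩
      · rw [count_append, Nat.cast_add, hq']
        have := hxq.2
        rw [← this]

lemma invariant [NeZero n] (w : List (Fin 4)) (h : PO m w = some (-1)) : (0 : ZMod n) ∈ SF m n w := by
  rw [PO] at h
  split_ifs at h with h3
  rw [Option.some_inj] at h
  exact mem_SF.2 ⟨w, [], by simp, ⟨h3, h⟩, by simp, by simp⟩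

end PT

namespace PT
open List
variable {m n : ℕ}

lemma zero_ne_neg_one (hm : 3 ≤ m) : (0 : ZMod m) ≠ -1 := by
  haveI : NeZero m := ⟨by omega⟩
  intro h
  rw [← cast_pred (show 1 ≤ m by omega)] at h
  have := congrArg ZMod.val h
  rw [ZMod.val_zero, ZMod.val_cast_of_lt (by omega)] at this
  omega

lemma SP_nil (hm : 3 ≤ m) : SP m n ([] : List (Fin 4)) = ∅ := by
  ext q
  simp only [SP, Set.mem_setOf_eq, Set.mem_empty_iff_false, iff_false]
  rintro ⟨u, v, huv, hu, -, -⟩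
  have hu0 : u = [] := by
    have := congrArg List.length huv
    simp at this
    exact eq_nil_of_length_eq_zero (by omega)
  subst hu0
  exact zero_ne_neg_one hm (by simpa using hu.2)

lemma SP_append (w z : List (Fin 4)) :
    SP m n (w ++ z) =
      {q | (2:Fin 4) ∉ z ∧ ∃ q₀ ∈ SP m n w, q = q₀ + ((z.count 1 : ℕ) : ZMod n)} ∪
      {q | ∃ s t : List (Fin 4), z = s ++ t ∧ w ++ s ∈ LA m ∧ (2:Fin 4) ∉ t ∧ ((t.count 1 : ℕ) : ZMod n) = q} := by
  ext q
  constructor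
  · rintro ⟨u, v, huv, hu, h2, hq⟩
    rcases List.append_eq_append_iff.1 huv.symm with ⟨a', ha1, ha2⟩ | ⟨c', hc1, hc2⟩
    · -- u = w ++ c'? careful direction
      -- huv : w ++ z = u ++ v ; case : u = w ++ a'?? check orientation below
      left
      rw [ha2] at h2 hq
      rw [mem_append] at h2
      push_neg at h2
      rw [count_append, Nat.cast_add] at hq
      exact ⟨h2.2, _, ⟨u, a', ha1, hu, h2.1, rfl⟩, hq.symm⟩
    · right
      exact ⟨c', v, hc2, hc1 ▸ hu, h2, hq⟩
  · rintro (⟨h2z, q₀, ⟨u, v, huv, hu, h2v, hq⟩, rfl⟩ | ⟨s, t, hst, hs, h2t, hq⟩)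
    · refine ⟨u, v ++ z, by rw [huv, append_assoc], hu, ?_, ?_⟩
      · rw [mem_append]; push_neg; exact ⟨h2v, h2z⟩
      · rw [count_append, Nat.cast_add, hq]
    · refine ⟨w ++ s, t, by rw [hst, append_assoc], hs, h2t, hq⟩

end PT

namespace PT
open List
variable {m n : ℕ}

lemma cast_eq_neg_one_iff (hm : 3 ≤ m) {i : ℕ} (hi : i ≤ m) :
    ((i : ℕ) : ZMod m) = -1 ↔ i = m - 1 := by
  haveI : NeZero m := ⟨by omega⟩
  rw [← cast_pred (show 1 ≤ m by omega)]
  constructor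
  · intro h
    rcases Nat.lt_or_ge i m with hlt | hge
    · have := congrArg ZMod.val h
      rwa [ZMod.val_cast_of_lt hlt, ZMod.val_cast_of_lt (by omega)] at this
    · have him : i = m := by omega
      subst him
      rw [ZMod.natCast_self] at h
      exact absurd (h.trans (cast_pred (by omega))) (zero_ne_neg_one hm)
  · rintro rfl; rfl

lemma SP_appB (hm : 3 ≤ m) {w : List (Fin 4)} (h0 : ((w.count 0 : ℕ) : ZMod m) = 0) (t : ℕ) :
    SP m n (w ++ replicate t 1) = (· + ((t : ℕ) : ZMod n)) '' SP m n w := by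
  rw [SP_append]
  have h2 : {q : ZMod n | ∃ s t' : List (Fin 4), replicate t 1 = s ++ t' ∧ w ++ s ∈ LA m ∧ (2:Fin 4) ∉ t' ∧ ((t'.count 1 : ℕ) : ZMod n) = q} = ∅ := by
    ext q
    simp only [Set.mem_setOf_eq, Set.mem_empty_iff_false, iff_false]
    rintro ⟨s, t', hst, hs, -, -⟩
    have h0s : (0:Fin 4) ∉ s := by
      intro hmem
      have : (0:Fin 4) ∈ replicate t 1 := hst ▸ mem_append_left _ hmem
      exact absurd (mem_replicate.1 this).2 (by decide)
    have : ((s.count 0 : ℕ)) = 0 := count_eq_zero_of_not_mem h0s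
    have hs2 := hs.2
    rw [count_append, this, Nat.add_zero, h0] at hs2
    exact zero_ne_neg_one hm hs2
  rw [h2]
  ext q
  simp only [Set.union_empty, Set.mem_setOf_eq, Set.mem_image]
  constructor
  · rintro ⟨-, q₀, hq₀, rfl⟩
    exact ⟨q₀, hq₀, by rw [count_replicate, if_pos (by decide)]⟩
  · rintro ⟨q₀, hq₀, rfl⟩
    refine ⟨not_mem_replicate (by decide), q₀, hq₀, by rw [count_replicate, if_pos (by decide)]⟩

lemma SP_appA (hm : 3 ≤ m) {w : List (Fin 4)} (h3 : (3:Fin 4) ∉ w)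
    (h0 : ((w.count 0 : ℕ) : ZMod m) = 0) {t : ℕ} (ht : t ≤ m) :
    SP m n (w ++ replicate t 0) = SP m n w ∪ (if m - 1 ≤ t then {0} else ∅) := by
  rw [SP_append]
  congr 1
  · ext q
    simp only [Set.mem_setOf_eq]
    constructor
    · rintro ⟨-, q₀, hq₀, rfl⟩
      rwa [count_replicate, if_neg (by decide), Nat.cast_zero, add_zero]
    · intro hq
      exact ⟨not_mem_replicate (by decide), q, hq, by rw [count_replicate, if_neg (by decide), Nat.cast_zero, add_zero]⟩
  · ext q
    simp only [Set.mem_setOf_eq]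
    constructor
    · rintro ⟨s, t', hst, hs, -, hq⟩
      have hs1 : s = replicate s.length 0 := eq_replicate_of_mem (fun b hb => by
        have : b ∈ replicate t (0:Fin 4) := hst ▸ mem_append_left _ hb
        exact (mem_replicate.1 this).2)
      have ht1 : t' = replicate t'.length 0 := eq_replicate_of_mem (fun b hb => by
        have : b ∈ replicate t (0:Fin 4) := hst ▸ mem_append_right _ hb
        exact (mem_replicate.1 this).2)
      have hlen : s.length + t'.length = t := by
        have := congrArg List.length hst
        simp at this
        omega
      have hcount : ((s.length : ℕ) : ZMod m) = -1 := by
        have hs2 := hs.2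
        rw [count_append, Nat.cast_add, h0, zero_add] at hs2
        rwa [hs1, count_replicate, if_pos (by decide)] at hs2
      have hsl : s.length = m - 1 := (cast_eq_neg_one_iff hm (by omega)).1 hcount
      have hq0 : q = 0 := by
        rw [← hq, ht1, count_replicate, if_neg (by decide), Nat.cast_zero]
      rw [if_pos (by omega), hq0]
      exact Set.mem_singleton _
    · intro hq
      split_ifs at hq with hmt
      · rw [Set.mem_singleton_iff] at hq
        subst hq
        refine ⟨replicate (m-1) 0, replicate (t - (m-1)) 0, ?_, ⟨?_, ?_⟩, not_mem_replicate (by decide), by rw [count_replicate, if_neg (by decide), Nat.cast_zero]⟩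
        · rw [← replicate_add]
          congr 1
          omega
        · rw [mem_append]
          push_neg
          exact ⟨h3, not_mem_replicate (by decide)⟩
        · rw [count_append, Nat.cast_add, h0, zero_add, count_replicate, if_pos (by decide)]
          exact cast_pred (by omega)
      · exact absurd hq (Set.notMem_empty _)

lemma SP_appD (hm : 3 ≤ m) {w : List (Fin 4)} (h0 : ((w.count 0 : ℕ) : ZMod m) = 0) :
    SP m n (w ++ [3]) = SP m n w := by
  rw [SP_append]
  have h2 : {q : ZMod n | ∃ s t' : List (Fin 4), [(3:Fin 4)] = s ++ t' ∧ w ++ s ∈ LA m ∧ (2:Fin 4) ∉ t' ∧ ((t'.count 1 : ℕ) : ZMod n) = q} = ∅ := by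
    ext q
    simp only [Set.mem_setOf_eq, Set.mem_empty_iff_false, iff_false]
    rintro ⟨s, t', hst, hs, -, -⟩
    rcases s with _ | ⟨a, s'⟩
    · have : w ∈ LA m := by simpa using hs
      exact zero_ne_neg_one hm (h0 ▸ this.2)
    · rw [cons_append] at hst
      injection hst with ha _
      exact hs.1 (mem_append_right _ (by rw [← ha]; exact mem_cons_self))
  rw [h2]
  ext q
  simp only [Set.union_empty, Set.mem_setOf_eq]
  constructor
  · rintro ⟨-, q₀, hq₀, rfl⟩
    simpa using hq₀
  · intro hq
    refine ⟨by decide, q, hq, by simp⟩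

end PT

namespace PT
open List
variable {m n : ℕ}

lemma reach_main (hm : 3 ≤ m) (hn : 3 ≤ n) (S : Finset (ZMod n)) :
    ∃ w : List (Fin 4), (3:Fin 4) ∉ w ∧ (2:Fin 4) ∉ w ∧ ((w.count 0 : ℕ) : ZMod m) = 0 ∧ SP m n w = ↑S := by
  haveI : NeZero n := ⟨by omega⟩
  generalize hc : S.card = k
  induction k using Nat.strong_induction_on generalizing S with
  | _ k IH =>
  rcases S.eq_empty_or_nonempty with rfl | ⟨s, hsS⟩
  · exact ⟨[], by simp, by simp, by simp, by rw [SP_nil hm]; simp⟩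
  · have hinj : Function.Injective (fun x : ZMod n => x - s) := fun x y h => by
      have h2 : x - s = y - s := h
      have h3 : x - s + s = y - s + s := by rw [h2]
      simpa using h3

    set S' : Finset (ZMod n) := (S.image (fun x => x - s)).erase 0 with hS'
    have h0mem : (0 : ZMod n) ∈ S.image (fun x => x - s) :=
      Finset.mem_image.2 ⟨s, hsS, sub_self s⟩
    have hcard : S'.card < k := by
      rw [hS', Finset.card_erase_of_mem h0mem, Finset.card_image_of_injective _ hinj]
      have : 0 < S.card := Finset.card_pos.2 ⟨s, hsS⟩
      omega
    obtain ⟨w', h3, h2, h0, hSP⟩ := IH S'.card hcard S' rfl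
    have h3' : (3:Fin 4) ∉ w' ++ replicate m 0 := by
      rw [mem_append]; push_neg; exact ⟨h3, not_mem_replicate (by decide)⟩
    have h0' : (((w' ++ replicate m 0).count 0 : ℕ) : ZMod m) = 0 := by
      rw [count_append, Nat.cast_add, h0, zero_add, count_replicate, if_pos (by decide), ZMod.natCast_self]
    refine ⟨w' ++ replicate m 0 ++ replicate s.val 1, ?_, ?_, ?_, ?_⟩
    · rw [mem_append]; push_neg
      exact ⟨h3', not_mem_replicate (by decide)⟩
    · rw [mem_append, mem_append]; push_neg
      exact ⟨⟨h2, not_mem_replicate (by decide)⟩, not_mem_replicate (by decide)⟩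
    · rw [count_append, Nat.cast_add, h0', count_replicate, if_neg (by decide), Nat.cast_zero, zero_add]
    · rw [SP_appB hm h0', SP_appA hm h3 h0 (le_refl m), if_pos (by omega), hSP]
      ext q
      simp only [Set.mem_image, Set.mem_union, Finset.mem_coe, Set.mem_singleton_iff, val_cast]
      constructor
      · rintro ⟨q₀, hq₀ | rfl, rfl⟩
        · rw [hS', Finset.mem_erase, Finset.mem_image] at hq₀
          rcases hq₀ with ⟨-, x, hx, rfl⟩
          simpa using hx
        · simpa using hsS
      · intro hq
        by_cases hqs : q = s
        · exact ⟨0, Or.inr rfl, by rw [zero_add, hqs]⟩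
        · refine ⟨q - s, Or.inl ?_, by ring⟩
          rw [hS', Finset.mem_erase, Finset.mem_image]
          exact ⟨sub_ne_zero.2 hqs, q, hq, rfl⟩

lemma neg_one_val (hm : 3 ≤ m) : (-1 : ZMod m).val = m - 1 := by
  haveI : NeZero m := ⟨by omega⟩
  rw [← cast_pred (show 1 ≤ m by omega), ZMod.val_cast_of_lt (by omega)]

lemma exists_word (hm : 3 ≤ m) (hn : 3 ≤ n) (po : Option (ZMod m)) (S : Finset (ZMod n))
    (hvalid : po = some (-1) → (0:ZMod n) ∈ S) :
    ∃ w, PO m w = po ∧ SP m n w = ↑S := by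
  haveI : NeZero m := ⟨by omega⟩
  haveI : NeZero n := ⟨by omega⟩
  obtain ⟨w', h3, h2, h0, hSP⟩ := reach_main hm hn S
  cases po with
  | none =>
      refine ⟨w' ++ [3], ?_, by rw [SP_appD hm h0, hSP]⟩
      rw [PO, if_pos (mem_append_right _ (mem_cons_self))]
  | some p =>
      have hval : p.val < m := ZMod.val_lt p
      refine ⟨w' ++ replicate p.val 0, ?_, ?_⟩
      · rw [PO, if_neg ?_]
        · congr 1
          rw [count_append, Nat.cast_add, h0, zero_add, count_replicate, if_pos (by decide), val_cast]
        · rw [mem_append]; push_neg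
          exact ⟨h3, not_mem_replicate (by decide)⟩
      · rw [SP_appA hm h3 h0 (by omega), hSP]
        by_cases hp : p = -1
        · rw [if_pos (by rw [hp, neg_one_val hm])]
          have h0S : (0:ZMod n) ∈ S := hvalid (by rw [hp])
          ext q
          simp only [Set.mem_union, Finset.mem_coe, Set.mem_singleton_iff]
          constructor
          · rintro (h | rfl)
            · exact h
            · exact h0S
          · exact Or.inl
        · rw [if_neg ?_, Set.union_empty]
          intro hle
          have : p.val = m - 1 := by omega
          apply hp
          have := congrArg (fun i : ℕ => ((i : ℕ) : ZMod m)) this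
          simpa [val_cast, cast_pred (show 1 ≤ m by omega)] using this

end PT

namespace PT
open List
variable {m n : ℕ}

def XP (m n : ℕ) [NeZero m] (p : ZMod m) : List (Fin 4) :=
  (replicate (-1-p).val 0 ++ [2]) ++ replicate (n-1) 1

lemma mem_KQ_XP (hm : 3 ≤ m) (hn : 3 ≤ n) [NeZero m] [NeZero n] (p : ZMod m)
    (po : Option (ZMod m)) (S : Finset (ZMod n)) :
    XP m n p ∈ KQ m n (po, S) ↔ po = some p := by
  haveI : NeZero n := ‹_›
  have h2mem : (2:Fin 4) ∈ XP m n p :=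
    mem_append_left _ (mem_append_right _ (mem_cons_self))
  constructor
  · intro h
    rcases h with h | ⟨q', -, hx⟩
    swap
    · exact absurd h2mem hx.1
    · cases po with
      | none =>
          simp only [Option.elim] at h
          rw [zero_mul] at h
          exact h.elim
      | some p' =>
          simp only [Option.elim] at h
          replace h := Language.mem_mul.1 h
          rcases h with ⟨u, hu, v, hv, huv⟩
          -- v is a suffix of XP, 2 ∉ v
          have hvsuf : v <:+ XP m n p := ⟨u, huv⟩
          have hBsuf : replicate (n-1) (1:Fin 4) <:+ XP m n p := suffix_append _ _
          have hvB : v <:+ replicate (n-1) (1:Fin 4) := by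
            rcases List.suffix_or_suffix_of_suffix hvsuf hBsuf with h | h
            · exact h
            · rcases h with ⟨t, rfl⟩
              rcases t.eq_nil_or_concat with rfl | ⟨t', x, rfl⟩
              · exact (nil_append _ : ([] : List (Fin 4)) ++ _ = _) ▸ suffix_refl _
              · exfalso
                rw [concat_eq_append] at huv hv
                have h5 : (u ++ (t' ++ [x])) ++ replicate (n-1) 1 = (replicate (-1-p).val 0 ++ [2]) ++ replicate (n-1) 1 := by
                  simp only [append_assoc]
                  simpa [XP, append_assoc] using huv
                have huv' := append_cancel_right h5
                have hx2 : x = 2 := by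
                  have h6 := congrArg (fun l : List (Fin 4) => l.getLast?) huv'
                  simp only [← append_assoc] at h6
                  rw [getLast?_concat, getLast?_concat] at h6
                  exact Option.some.inj h6
                subst hx2
                exact hv.1 (by simp)
          have hvrep : v = replicate v.length 1 := eq_replicate_of_mem (fun b hb => by
            have := hvB.subset hb
            exact (mem_replicate.1 this).2)
          have hvlen : v.length = n - 1 := by
            have hle : v.length ≤ n - 1 := by
              have := hvB.length_le
              simpa using this
            have hcast : ((v.length : ℕ) : ZMod n) = -1 := by
              have := hv.2
              rwa [hvrep, count_replicate, if_pos (by decide)] at this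
            exact (cast_eq_neg_one_iff hn (by omega)).1 hcast
          have hvB' : v = replicate (n-1) (1:Fin 4) := by rw [hvrep, hvlen]
          have hu' : u = replicate (-1-p).val 0 ++ [2] := by
            apply append_cancel_right (bs := replicate (n-1) (1:Fin 4))
            rw [← hvB', huv]; rw [XP, hvB']
          have hcount : ((u.count 0 : ℕ) : ZMod m) = -1 - p := by
            rw [hu', count_append, count_replicate, if_pos (by decide), count_singleton, if_neg (by decide), Nat.add_zero, val_cast]
          have := hu.2
          rw [hcount] at this
          congr 1
          linear_combination this
  · rintro rfl
    left
    simp only [Option.elim]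
    refine Language.mem_mul.2 ?_
    refine ⟨replicate (-1-p).val 0 ++ [2], ⟨?_, ?_⟩, replicate (n-1) 1, repB_mem (by omega), rfl⟩
    · rw [mem_append]; push_neg
      exact ⟨not_mem_replicate (by decide), by decide⟩
    · rw [count_append, count_replicate, if_pos (by decide), count_singleton, if_neg (by decide), Nat.add_zero, val_cast]
      ring

end PT

namespace PT
open List
variable {m n : ℕ}

def YQ (n : ℕ) [NeZero n] (q : ZMod n) : List (Fin 4) :=
  3 :: replicate (-1-q).val 1

lemma mem_KQ_YQ (hm : 3 ≤ m) (hn : 3 ≤ n) [NeZero m] [NeZero n] (q : ZMod n)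
    (po : Option (ZMod m)) (S : Finset (ZMod n)) :
    YQ n q ∈ KQ m n (po, S) ↔ ((po = some (-1) ∧ q = 0) ∨ q ∈ S) := by
  have hcnt : (((YQ n q).count 1 : ℕ) : ZMod n) = -1 - q := by
    rw [YQ, count_cons, if_neg (by decide), Nat.add_zero, count_replicate, if_pos (by decide), val_cast]
  constructor
  · intro h
    rcases h with h | ⟨q', hq'S, hx⟩
    · cases po with
      | none =>
          simp only [Option.elim] at h
          rw [zero_mul] at h
          exact h.elim
      | some p' =>
          simp only [Option.elim] at h
          replace h := Language.mem_mul.1 h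
          rcases h with ⟨u, hu, v, hv, huv⟩
          have hu0 : u = [] := by
            rcases u with _ | ⟨a, u'⟩
            · rfl
            · exfalso
              rw [cons_append] at huv
              rw [YQ] at huv
              injection huv with h1 h2
              exact hu.1 (by rw [h1]; exact mem_cons_self)
          subst hu0
          rw [nil_append] at huv
          subst huv
          left
          have hp' : p' = -1 := by
            have := hu.2
            simpa using this
          have hq : q = 0 := by
            have := hv.2
            rw [hcnt] at this
            linear_combination -this
          exact ⟨by rw [hp'], hq⟩
    · right
      have := hx.2
      rw [hcnt] at this
      have hq' : q' = q := by linear_combination this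
      rwa [← hq']
  · intro h
    rcases h with ⟨hpo, hq0⟩ | hqS
    · left
      rw [hpo]
      simp only [Option.elim]
      refine Language.mem_mul.2 ?_
      refine ⟨[], ⟨by decide, by simpa using rfl⟩, YQ n q, ⟨?_, ?_⟩, by rw [nil_append]⟩
      · rw [YQ]
        intro hmem
        rcases mem_cons.1 hmem with h | h
        · exact absurd h (by decide)
        · exact absurd (mem_replicate.1 h).2 (by decide)
      · rw [hcnt, hq0]; ring
    · right
      refine ⟨q, hqS, ⟨?_, by rw [hcnt]; ring⟩⟩
      rw [YQ]
      intro hmem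
      rcases mem_cons.1 hmem with h | h
      · exact absurd h (by decide)
      · exact absurd (mem_replicate.1 h).2 (by decide)

lemma KQ_injOn (hm : 3 ≤ m) (hn : 3 ≤ n) [NeZero m] [NeZero n] :
    Set.InjOn (KQ m n) (VS m n) := by
  rintro ⟨po, S⟩ hx ⟨po', S'⟩ hx' h
  have hpo : po = po' := by
    cases po with
    | none =>
        cases po' with
        | none => rfl
        | some p' =>
            have h1 := (mem_KQ_XP hm hn p' (some p') S').2 rfl
            rw [← h] at h1
            exact (mem_KQ_XP hm hn p' none S).1 h1
    | some p =>
        have := (mem_KQ_XP hm hn p (some p) S).2 rfl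
        rw [h] at this
        exact ((mem_KQ_XP hm hn p po' S').1 this).symm
  subst hpo
  have hS : S = S' := by
    ext q
    by_cases hpo1 : po = some (-1)
    · have h0S : (0:ZMod n) ∈ S := hx hpo1
      have h0S' : (0:ZMod n) ∈ S' := hx' hpo1
      by_cases hq0 : q = 0
      · subst hq0; simp [h0S, h0S']
      · constructor
        · intro hqS
          have := (mem_KQ_YQ hm hn q po S).2 (Or.inr hqS)
          rw [h] at this
          rcases (mem_KQ_YQ hm hn q po S').1 this with ⟨-, h0⟩ | hS' 
          · exact absurd h0 hq0
          · exact hS'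
        · intro hqS
          have := (mem_KQ_YQ hm hn q po S').2 (Or.inr hqS)
          rw [← h] at this
          rcases (mem_KQ_YQ hm hn q po S).1 this with ⟨-, h0⟩ | hS' 
          · exact absurd h0 hq0
          · exact hS'
    · constructor
      · intro hqS
        have := (mem_KQ_YQ hm hn q po S).2 (Or.inr hqS)
        rw [h] at this
        rcases (mem_KQ_YQ hm hn q po S').1 this with ⟨h0, -⟩ | hS' 
        · exact absurd h0 hpo1
        · exact hS'
      · intro hqS
        have := (mem_KQ_YQ hm hn q po S').2 (Or.inr hqS)
        rw [← h] at this
        rcases (mem_KQ_YQ hm hn q po S).1 this with ⟨h0, -⟩ | hS' 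
        · exact absurd h0 hpo1
        · exact hS'
  rw [hS]

end PT

namespace PT
open List
variable {m n : ℕ}

lemma alphabet_prod (hm : 3 ≤ m) (hn : 3 ≤ n) : alphabetOf (LA m * LB n) = Set.univ := by
  apply Set.eq_univ_of_forall
  intro a
  have hA : replicate (m-1) (0:Fin 4) ∈ LA m := repA_mem (by omega)
  have hB : replicate (n-1) (1:Fin 4) ∈ LB n := repB_mem (by omega)
  fin_cases a
  · -- a = 0 : [] ++ [0] ++ (replicate (m-2) 0 ++ replicate (n-1) 1)
    refine ⟨[], replicate (m-2) 0 ++ replicate (n-1) 1, ?_⟩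
    rw [Language.mem_mul]
    refine ⟨[0] ++ replicate (m-2) 0, ⟨?_, ?_⟩, replicate (n-1) 1, hB, by simp [append_assoc]⟩
    · rw [mem_append]; push_neg
      exact ⟨by decide, not_mem_replicate (by decide)⟩
    · have : (([0] ++ replicate (m-2) 0 : List (Fin 4)).count 0) = m - 1 := by
        simp [count_replicate]; omega
      rw [this]; exact cast_pred (by omega)
  · -- a = 1
    refine ⟨replicate (m-1) 0, replicate (n-2) 1, ?_⟩
    rw [Language.mem_mul]
    refine ⟨replicate (m-1) 0, hA, [1] ++ replicate (n-2) 1, ⟨?_, ?_⟩, by simp [append_assoc]⟩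
    · rw [mem_append]; push_neg
      exact ⟨by decide, not_mem_replicate (by decide)⟩
    · have : (([1] ++ replicate (n-2) 1 : List (Fin 4)).count 1) = n - 1 := by
        simp [count_replicate]; omega
      rw [this]; exact cast_pred (by omega)
  · -- a = 2
    refine ⟨replicate (m-1) 0, replicate (n-1) 1, ?_⟩
    rw [Language.mem_mul]
    refine ⟨replicate (m-1) 0 ++ [2], ⟨?_, ?_⟩, replicate (n-1) 1, hB, by simp [append_assoc]⟩
    · rw [mem_append]; push_neg
      exact ⟨not_mem_replicate (by decide), by decide⟩
    · have : ((replicate (m-1) 0 ++ [2] : List (Fin 4)).count 0) = m - 1 := by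
        simp [count_replicate]
      rw [this]; exact cast_pred (by omega)
  · -- a = 3
    refine ⟨replicate (m-1) 0 ++ replicate (n-1) 1, [], ?_⟩
    rw [Language.mem_mul]
    refine ⟨replicate (m-1) 0, hA, replicate (n-1) 1 ++ [3] ++ [], ⟨?_, ?_⟩, by simp [append_assoc]⟩
    · rw [mem_append, mem_append]; push_neg
      exact ⟨⟨not_mem_replicate (by decide), by decide⟩, by decide⟩
    · have : ((replicate (n-1) 1 ++ [3] ++ [] : List (Fin 4)).count 1) = n - 1 := by
        simp [count_replicate]
      rw [this]; exact cast_pred (by omega)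

lemma quotSet_prod (hm : 3 ≤ m) (hn : 3 ≤ n) [NeZero m] [NeZero n] :
    quotientSet (LA m * LB n) = KQ m n '' (VS m n) := by
  ext K
  constructor
  · rintro ⟨w, -, rfl⟩
    exact ⟨(PO m w, SF m n w), fun h => invariant w h, (quot_prod w).symm⟩
  · rintro ⟨⟨po, S⟩, hv, rfl⟩
    obtain ⟨w, hPO, hSP⟩ := exists_word hm hn po S hv
    have hSF : SF m n w = S := by
      apply Finset.coe_injective
      rw [SF, Set.Finite.coe_toFinset]
      exact hSP
    refine ⟨w, ?_, ?_⟩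
    · intro a _
      rw [alphabet_prod hm hn]
      trivial
    · rw [quot_prod w, hPO, hSF]

lemma card_VS (hm : 3 ≤ m) (hn : 3 ≤ n) [NeZero m] [NeZero n] :
    (VS m n).Finite ∧ (VS m n).ncard = m * 2^n + 2^(n-1) := by
  classical
  have hfin : (VS m n).Finite := Set.toFinite _
  refine ⟨hfin, ?_⟩
  rw [Set.ncard_eq_toFinset_card']
  have hVt : (VS m n).toFinset = Finset.univ.filter (fun x : Option (ZMod m) × Finset (ZMod n) => x.1 = some (-1) → (0:ZMod n) ∈ x.2) := by
    ext x
    rw [Set.mem_toFinset]; simp [VS]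
  rw [hVt]
  have hneg : Finset.univ.filter (fun x : Option (ZMod m) × Finset (ZMod n) => ¬(x.1 = some (-1) → (0:ZMod n) ∈ x.2)) =
      {some (-1)} ×ˢ (Finset.univ.filter (fun S : Finset (ZMod n) => (0:ZMod n) ∉ S)) := by
    ext x
    simp only [Finset.mem_filter, Finset.mem_univ, true_and, Finset.mem_product, Finset.mem_singleton]
    constructor
    · intro h
      push_neg at h
      exact ⟨h.1, by simpa using h.2⟩
    · intro h
      push_neg
      exact ⟨h.1, by simpa using h.2⟩
  have hS0 : (Finset.univ.filter (fun S : Finset (ZMod n) => (0:ZMod n) ∉ S)) = (Finset.univ.erase (0:ZMod n)).powerset := by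
    ext S
    simp only [Finset.mem_filter, Finset.mem_univ, true_and, Finset.mem_powerset]
    constructor
    · intro h a ha
      exact Finset.mem_erase.2 ⟨fun h0 => h (h0 ▸ ha), Finset.mem_univ a⟩
    · intro h h0
      exact (Finset.mem_erase.1 (h h0)).1 rfl
  have hcard_neg : (Finset.univ.filter (fun x : Option (ZMod m) × Finset (ZMod n) => ¬(x.1 = some (-1) → (0:ZMod n) ∈ x.2))).card = 2^(n-1) := by
    rw [hneg, Finset.card_product, hS0, Finset.card_singleton, Finset.card_powerset, Finset.card_erase_of_mem (Finset.mem_univ _), one_mul]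
    congr 1
    simp [ZMod.card]
  have htot : (Finset.univ : Finset (Option (ZMod m) × Finset (ZMod n))).card = (m+1) * 2^n := by
    rw [Finset.card_univ, Fintype.card_prod, Fintype.card_option, ZMod.card, Fintype.card_finset, ZMod.card]
  have hsplit := Finset.card_filter_add_card_filter_not (s := (Finset.univ : Finset (Option (ZMod m) × Finset (ZMod n)))) (p := fun x => x.1 = some (-1) → (0:ZMod n) ∈ x.2)
  rw [hcard_neg, htot] at hsplit
  have h2n : 2^n = 2 * 2^(n-1) := by
    rw [← pow_succ']
    congr 1
    omega
  rw [h2n] at hsplit ⊢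
  have hre : (m+1) * (2 * 2^(n-1)) = 2 * (m * 2^(n-1)) + 2 * 2^(n-1) := by ring
  rw [hre] at hsplit
  have hgoal : m * (2 * 2^(n-1)) = 2 * (m * 2^(n-1)) := by ring
  rw [hgoal]
  omega

end PT

/-- the bound `m·2^n + 2^(n-1)` for product is tight, with witnesses over
three-letter alphabets sharing exactly two letters. -/
theorem product_tight (m n : ℕ) (hm : 3 ≤ m) (hn : 3 ≤ n) :
    ∃ L' L : Language (Fin 4),
      (alphabetOf L').ncard = 3 ∧ (alphabetOf L).ncard = 3 ∧
      (alphabetOf L' ∩ alphabetOf L).ncard = 2 ∧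
      (alphabetOf L' \ alphabetOf L).Nonempty ∧
      (alphabetOf L \ alphabetOf L').Nonempty ∧
      HasComplexity L' m ∧ HasComplexity L n ∧
      HasComplexity (L' * L) (m * 2 ^ n + 2 ^ (n - 1)) := by
  haveI : NeZero m := ⟨by omega⟩
  haveI : NeZero n := ⟨by omega⟩
  refine ⟨PT.LA m, PT.LB n, ?_, ?_, ?_, ?_, ?_, PT.complexity_LA hm, PT.complexity_LB hn, ?_⟩
  · rw [PT.alphabet_LA hm]
    rw [show ({0,1,2} : Set (Fin 4)) = ↑({0,1,2} : Finset (Fin 4)) by simp, Set.ncard_coe_finset]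
    decide
  · rw [PT.alphabet_LB hn]
    rw [show ({0,1,3} : Set (Fin 4)) = ↑({0,1,3} : Finset (Fin 4)) by simp, Set.ncard_coe_finset]
    decide
  · rw [PT.alphabet_LA hm, PT.alphabet_LB hn]
    have hI : (({0,1,2} : Set (Fin 4)) ∩ {0,1,3}) = ↑({0,1} : Finset (Fin 4)) := by
      ext a
      simp only [Set.mem_inter_iff, Set.mem_insert_iff, Set.mem_singleton_iff,
        Finset.coe_insert, Finset.coe_singleton]
      omega
    rw [hI, Set.ncard_coe_finset]
    decide
  · rw [PT.alphabet_LA hm, PT.alphabet_LB hn]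
    refine ⟨2, ?_⟩
    simp only [Set.mem_diff, Set.mem_insert_iff, Set.mem_singleton_iff]
    decide
  · rw [PT.alphabet_LA hm, PT.alphabet_LB hn]
    refine ⟨3, ?_⟩
    simp only [Set.mem_diff, Set.mem_insert_iff, Set.mem_singleton_iff]
    decide
  · rw [HasComplexity, PT.quotSet_prod hm hn]
    obtain ⟨hfin, hcard⟩ := PT.card_VS (m := m) (n := n) hm hn
    refine ⟨hfin.image _, ?_⟩
    rw [Set.ncard_image_of_injOn (PT.KQ_injOn hm hn), hcard]
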